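/- As p → ∞, (1+p)·K_p → e^{-1}, where K_p = sup_{x∈[0,1]} (x(1-x)^p + (1-x)x^p). -/

import Mathlib

noncomputable def kappa (p x : ℝ) : ℝ := x * (1 - x) ^ p + (1 - x) * x ^ p

noncomputable def Kmax (p : ℝ) : ℝ := sSup (kappa p '' Set.Icc (0:ℝ) 1)

open Real Filter Set

noncomputable def Mp (p : ℝ) : ℝ := (1/(p+1)) * (p/(p+1))^p

lemma amgm {p : ℝ} (hp : 1 ≤ p) {x : ℝ} (hx0 : 0 ≤ x) (hx1 : x ≤ 1) :
    x * (1-x)^p ≤ Mp p := by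
  have hp0 : 0 < p := by linarith
  have hp1 : 0 < p + 1 := by linarith
  have h1x : 0 ≤ 1 - x := by linarith
  set u := (p+1)*x with hu
  set v := ((p+1)/p)*(1-x) with hv
  have hu0 : 0 ≤ u := by positivity
  have hv0 : 0 ≤ v := by positivity
  have hw : 1/(p+1) + p/(p+1) = 1 := by field_simp; ring
  have key := Real.geom_mean_le_arith_mean2_weighted (by positivity) (by positivity) hu0 hv0 hw
  have harith : (1/(p+1)) * u + (p/(p+1)) * v = 1 := by
    rw [hu, hv]; field_simp; ring
  rw [harith] at key
  have hkey : u * v ^ p ≤ 1 := by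
    have hpow : (u ^ (1/(p+1)) * v ^ (p/(p+1))) ^ (p+1) ≤ 1 := by
      have := Real.rpow_le_one (by positivity) key (by positivity : (0:ℝ) ≤ p + 1)
      simpa using this
    have hexpand : (u ^ (1/(p+1)) * v ^ (p/(p+1))) ^ (p+1) = u * v ^ p := by
      rw [Real.mul_rpow (Real.rpow_nonneg hu0 _) (Real.rpow_nonneg hv0 _),
          ← Real.rpow_mul hu0, ← Real.rpow_mul hv0]
      have e1 : 1/(p+1) * (p+1) = 1 := by field_simp
      have e2 : p/(p+1) * (p+1) = p := by field_simp
      rw [e1, e2, Real.rpow_one]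
    rwa [hexpand] at hpow
  have hvp : v ^ p = ((p+1)/p)^p * (1-x)^p :=
    Real.mul_rpow (by positivity) h1x
  have hC : 0 < ((p+1)/p)^p := Real.rpow_pos_of_pos (by positivity) _
  have hineq : x * (1-x)^p ≤ 1 / ((p+1) * ((p+1)/p)^p) := by
    rw [le_div_iff₀ (by positivity)]
    calc x * (1-x)^p * ((p+1) * ((p+1)/p)^p)
        = u * v ^ p := by rw [hvp, hu]; ring
      _ ≤ 1 := hkey
  have hMp : Mp p = 1 / ((p+1) * ((p+1)/p)^p) := by
    rw [Mp]
    have : (p/(p+1) : ℝ) = ((p+1)/p)⁻¹ := by rw [inv_div]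
    rw [this, Real.inv_rpow (by positivity)]
    field_simp
  rwa [hMp]

lemma kappa_le {p : ℝ} (hp : 1 ≤ p) {x : ℝ} (hx0 : 0 ≤ x) (hx1 : x ≤ 1) :
    kappa p x ≤ Mp p + (1/2)^p := by
  have hp0 : (0:ℝ) ≤ p := by linarith
  have h1x : 0 ≤ 1 - x := by linarith
  rcases le_total x (1/2) with h | h
  · have t1 : x * (1-x)^p ≤ Mp p := amgm hp hx0 hx1
    have t2 : (1-x) * x^p ≤ (1/2)^p := by
      have hxp : x^p ≤ (1/2)^p := Real.rpow_le_rpow hx0 h hp0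
      have : (1-x) * x^p ≤ x^p :=
        mul_le_of_le_one_left (Real.rpow_nonneg hx0 _) (by linarith)
      linarith
    unfold kappa; linarith
  · have t2 : (1-x) * x^p ≤ Mp p := by
      have := amgm hp h1x (by linarith : 1 - x ≤ 1)
      simpa using this
    have t1 : x * (1-x)^p ≤ (1/2)^p := by
      have hxp : (1-x)^p ≤ (1/2)^p := Real.rpow_le_rpow h1x (by linarith) hp0
      have : x * (1-x)^p ≤ (1-x)^p :=
        mul_le_of_le_one_left (Real.rpow_nonneg h1x _) hx1
      linarith
    unfold kappa; linarith

lemma Kmax_le {p : ℝ} (hp : 1 ≤ p) : Kmax p ≤ Mp p + (1/2)^p := by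
  apply csSup_le (Set.Nonempty.image _ ⟨0, by norm_num⟩)
  rintro _ ⟨x, hx, rfl⟩
  exact kappa_le hp hx.1 hx.2

lemma Kmax_ge {p : ℝ} (hp : 1 ≤ p) : Mp p ≤ Kmax p := by
  have hp1 : 0 < p + 1 := by linarith
  have hmem : (1/(p+1) : ℝ) ∈ Set.Icc (0:ℝ) 1 := by
    constructor
    · positivity
    · rw [div_le_one hp1]; linarith
  have hle : kappa p (1/(p+1)) ≤ Kmax p := by
    apply le_csSup
    · exact ⟨Mp p + (1/2)^p, by rintro _ ⟨x, hx, rfl⟩; exact kappa_le hp hx.1 hx.2⟩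
    · exact ⟨_, hmem, rfl⟩
  have heq : (1 : ℝ) - 1/(p+1) = p/(p+1) := by field_simp; ring
  have : Mp p ≤ kappa p (1/(p+1)) := by
    rw [kappa, heq, Mp]
    have : 0 ≤ p/(p+1) * (1/(p+1))^p := by positivity
    linarith
  linarith

/-- `(1+p)·K_p → e⁻¹` as `p → ∞`. -/
theorem Kmax_asymptotic :
    Filter.Tendsto (fun p : ℝ => (1 + p) * Kmax p) Filter.atTop
      (nhds (Real.exp (-1))) := by
  have hg : Tendsto (fun p : ℝ => (p/(p+1))^p) atTop (nhds (Real.exp (-1))) := by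
    have h1 : Tendsto (fun p : ℝ => ((1 + 1/p)^p)⁻¹) atTop (nhds (Real.exp 1)⁻¹) := by
      have := tendsto_one_add_div_rpow_exp 1
      exact this.inv₀ (Real.exp_ne_zero 1)
    rw [← Real.exp_neg] at h1
    apply h1.congr'
    filter_upwards [eventually_gt_atTop (0:ℝ)] with p hp
    have h : (1 : ℝ) + 1/p = (p+1)/p := by field_simp
    rw [h, ← Real.inv_rpow (by positivity), inv_div]
  have herr : Tendsto (fun p : ℝ => (1+p) * (1/2:ℝ)^p) atTop (nhds 0) := by
    have hb : (0:ℝ) < Real.log 2 := Real.log_pos (by norm_num)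
    have h1 := tendsto_rpow_mul_exp_neg_mul_atTop_nhds_zero 1 (Real.log 2) hb
    have h0 := tendsto_rpow_mul_exp_neg_mul_atTop_nhds_zero 0 (Real.log 2) hb
    have := h0.add h1
    rw [add_zero] at this
    apply this.congr'
    filter_upwards [eventually_gt_atTop (0:ℝ)] with p hp
    have hhalf : ((1:ℝ)/2)^p = Real.exp (-Real.log 2 * p) := by
      rw [Real.rpow_def_of_pos (by norm_num)]
      congr 1
      rw [one_div, Real.log_inv]
    rw [hhalf, Real.rpow_zero, Real.rpow_one]
    ring
  have hh : Tendsto (fun p : ℝ => (p/(p+1))^p + (1+p) * (1/2:ℝ)^p) atTop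
      (nhds (Real.exp (-1))) := by
    have := hg.add herr
    rwa [add_zero] at this
  apply tendsto_of_tendsto_of_tendsto_of_le_of_le' hg hh
  · filter_upwards [eventually_ge_atTop (1:ℝ)] with p hp
    have hp1 : (0:ℝ) < p + 1 := by linarith
    have := mul_le_mul_of_nonneg_left (Kmax_ge hp) (by linarith : (0:ℝ) ≤ 1 + p)
    calc (p/(p+1))^p = (1+p) * Mp p := by rw [Mp]; field_simp; ring
      _ ≤ (1+p) * Kmax p := this
  · filter_upwards [eventually_ge_atTop (1:ℝ)] with p hp
    have hp1 : (0:ℝ) < p + 1 := by linarith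
    have := mul_le_mul_of_nonneg_left (Kmax_le hp) (by linarith : (0:ℝ) ≤ 1 + p)
    calc (1+p) * Kmax p ≤ (1+p) * (Mp p + (1/2)^p) := this
      _ = (p/(p+1))^p + (1+p) * (1/2)^p := by rw [Mp]; field_simp; ring
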